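/- Let 1 < p ≤ 2. There exist constants 0 < c ≤ C, depending only on p, such that for every dimension d ≥ 1, every pair of relaxation parameters 0 < ε₋ ≤ ε₊ < ∞, and all vectors P, Q ∈ ℝ^d one has c · clamp(max(|P|,|Q|))^{p-2} · |P − Q|² ≤ |V_ε(P) − V_ε(Q)|² ≤ C · clamp(max(|P|,|Q|))^{p-2} · |P − Q|². -/

import Mathlib

open Real

set_option maxHeartbeats 1000000

lemma stmt1_aux (p : ℝ) (hp1 : 1 < p) (hp2 : p ≤ 2) (εm εp : ℝ) (hεm : 0 < εm) (hε : εm ≤ εp)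
    {d : ℕ} (P Q : EuclideanSpace ℝ (Fin d)) (hPQ : ‖Q‖ ≤ ‖P‖) :
    1/4 * (max εm (min (max ‖P‖ ‖Q‖) εp)) ^ (p - 2) * ‖P - Q‖ ^ 2
        ≤ ‖(max εm (min ‖P‖ εp)) ^ ((p - 2)/2) • P
            - (max εm (min ‖Q‖ εp)) ^ ((p - 2)/2) • Q‖ ^ 2 ∧
    ‖(max εm (min ‖P‖ εp)) ^ ((p - 2)/2) • P
        - (max εm (min ‖Q‖ εp)) ^ ((p - 2)/2) • Q‖ ^ 2
      ≤ 9/4 * (max εm (min (max ‖P‖ ‖Q‖) εp)) ^ (p - 2) * ‖P - Q‖ ^ 2 := by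
  rw [max_eq_left hPQ]
  set s := max εm (min ‖P‖ εp) with hs
  set t := max εm (min ‖Q‖ εp) with ht
  have hs_pos : 0 < s := lt_of_lt_of_le hεm (le_max_left _ _)
  have ht_pos : 0 < t := lt_of_lt_of_le hεm (le_max_left _ _)
  have hts : t ≤ s := max_le_max le_rfl (min_le_min hPQ le_rfl)
  set a := s ^ ((p - 2)/2) with ha_def
  set b := t ^ ((p - 2)/2) with hb_def
  have ha : 0 < a := Real.rpow_pos_of_pos hs_pos _
  have hb : 0 < b := Real.rpow_pos_of_pos ht_pos _
  have hexp : (p - 2)/2 ≤ 0 := by linarith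
  have hab : a ≤ b := Real.rpow_le_rpow_of_nonpos ht_pos hts hexp
  set r := b / a with hr_def
  have hr1 : 1 ≤ r := (one_le_div ha).mpr hab
  -- key estimate : (r - 1) * ‖Q‖ ≤ 1/2 * ‖P - Q‖
  have hkey : (r - 1) * ‖Q‖ ≤ 1/2 * ‖P - Q‖ := by
    rcases le_or_gt εp ‖Q‖ with hQ | hQ
    · have ht' : t = εp := by rw [ht, min_eq_right hQ, max_eq_right hε]
      have hs' : s = εp := by rw [hs, min_eq_right (le_trans hQ hPQ), max_eq_right hε]
      have hr' : r = 1 := by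
        rw [hr_def, ha_def, hb_def, hs', ht',
          div_self (Real.rpow_pos_of_pos (lt_of_lt_of_le hεm hε) _).ne']
      rw [hr']
      simp only [sub_self, zero_mul]
      positivity
    · have htQ : ‖Q‖ ≤ t := by
        rw [ht, min_eq_left hQ.le]; exact le_max_right _ _
      have hst_lip : s - t ≤ ‖P - Q‖ := by
        have h1 : s - t ≤ ‖P‖ - ‖Q‖ := by
          rw [hs, ht]
          rcases min_cases ‖P‖ εp with ⟨h1, h1'⟩ | ⟨h1, h1'⟩ <;>
          rcases min_cases ‖Q‖ εp with ⟨h2, h2'⟩ | ⟨h2, h2'⟩ <;>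
          rcases max_cases εm (min ‖P‖ εp) with ⟨h3, h3'⟩ | ⟨h3, h3'⟩ <;>
          rcases max_cases εm (min ‖Q‖ εp) with ⟨h4, h4'⟩ | ⟨h4, h4'⟩ <;>
          linarith
        exact le_trans h1 (norm_sub_norm_le P Q)
      have hx1 : (1:ℝ) ≤ s / t := (one_le_div ht_pos).mpr hts
      have hr_eq : r = (s / t) ^ ((2 - p)/2) := by
        rw [show (2 - p)/2 = -((p-2)/2) by ring, Real.rpow_neg (by positivity),
          Real.div_rpow hs_pos.le ht_pos.le, hr_def, ha_def, hb_def, inv_div]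
      have hr_le : r ≤ (s / t + 1) / 2 := by
        have h1 : (s / t) ^ ((2 - p)/2) ≤ (s / t) ^ (1/2 : ℝ) :=
          Real.rpow_le_rpow_of_exponent_le hx1 (by linarith)
        have h2 : (s / t) ^ (1/2 : ℝ) = Real.sqrt (s / t) := (Real.sqrt_eq_rpow _).symm
        have h3 : Real.sqrt (s / t) ≤ (s / t + 1) / 2 := by
          nlinarith [Real.sq_sqrt (le_trans zero_le_one hx1), Real.sqrt_nonneg (s / t),
            sq_nonneg (Real.sqrt (s / t) - 1)]
        rw [hr_eq]
        linarith
      have hrt : r * t ≤ (s + t) / 2 := by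
        calc r * t ≤ (s / t + 1) / 2 * t := mul_le_mul_of_nonneg_right hr_le ht_pos.le
          _ = (s + t) / 2 := by field_simp [ht_pos.ne']
      have h4 : (r - 1) * ‖Q‖ ≤ (r - 1) * t :=
        mul_le_mul_of_nonneg_left htQ (by linarith)
      have h5 : (r - 1) * t = r * t - t := by ring
      linarith
  -- rewrite the vector difference
  have hsmul : a • P - b • Q = a • (P - r • Q) := by
    rw [smul_sub, smul_smul, hr_def, mul_div_cancel₀ _ ha.ne']
  have hnorm : ‖a • P - b • Q‖ = a * ‖P - r • Q‖ := by
    rw [hsmul, norm_smul, Real.norm_eq_abs, abs_of_pos ha]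
  have hsplit : P - r • Q = (P - Q) - (r - 1) • Q := by
    rw [sub_smul, one_smul]; abel
  have hQnorm : ‖(r - 1) • Q‖ = (r - 1) * ‖Q‖ := by
    rw [norm_smul, Real.norm_eq_abs, abs_of_nonneg (by linarith)]
  have hub : ‖P - r • Q‖ ≤ 3/2 * ‖P - Q‖ := by
    calc ‖P - r • Q‖ ≤ ‖P - Q‖ + ‖(r - 1) • Q‖ := by rw [hsplit]; exact norm_sub_le _ _
      _ = ‖P - Q‖ + (r - 1) * ‖Q‖ := by rw [hQnorm]
      _ ≤ 3/2 * ‖P - Q‖ := by linarith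
  have hlb : 1/2 * ‖P - Q‖ ≤ ‖P - r • Q‖ := by
    have h6 : ‖P - Q‖ ≤ ‖P - r • Q‖ + ‖(r - 1) • Q‖ := by
      calc ‖P - Q‖ = ‖(P - r • Q) + (r - 1) • Q‖ := by rw [hsplit]; abel_nf
        _ ≤ ‖P - r • Q‖ + ‖(r - 1) • Q‖ := norm_add_le _ _
    rw [hQnorm] at h6
    linarith
  have ha2 : a ^ 2 = s ^ (p - 2) := by
    rw [ha_def, ← Real.rpow_natCast (s ^ ((p - 2)/2)) 2, ← Real.rpow_mul hs_pos.le]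
    norm_num
  rw [hnorm, mul_pow, ha2]
  have hA : 0 ≤ s ^ (p - 2) := Real.rpow_nonneg hs_pos.le _
  have hu : (0:ℝ) ≤ ‖P - Q‖ := norm_nonneg _
  have hv : (0:ℝ) ≤ ‖P - r • Q‖ := norm_nonneg _
  constructor
  · nlinarith [mul_le_mul_of_nonneg_left (mul_self_le_mul_self (by linarith) hlb) hA]
  · nlinarith [mul_le_mul_of_nonneg_left (mul_self_le_mul_self hv hub) hA]

/-- equivalence (with explicit constants depending only on `p`) between
`|V_ε(P) - V_ε(Q)|²` and `clamp(max(|P|,|Q|))^(p-2) |P - Q|²`, where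
`V_ε(P) = (ε₋ ∨ |P| ∧ ε₊)^((p-2)/2) P`. -/
theorem stmt_1 (p : ℝ) (hp1 : 1 < p) (hp2 : p ≤ 2) :
    ∃ c C : ℝ, 0 < c ∧ c ≤ C ∧
      ∀ (d : ℕ), 1 ≤ d →
      ∀ εm εp : ℝ, 0 < εm → εm ≤ εp →
      ∀ P Q : EuclideanSpace ℝ (Fin d),
        c * (max εm (min (max ‖P‖ ‖Q‖) εp)) ^ (p - 2) * ‖P - Q‖ ^ 2
            ≤ ‖(max εm (min ‖P‖ εp)) ^ ((p - 2)/2) • P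
                - (max εm (min ‖Q‖ εp)) ^ ((p - 2)/2) • Q‖ ^ 2 ∧
        ‖(max εm (min ‖P‖ εp)) ^ ((p - 2)/2) • P
            - (max εm (min ‖Q‖ εp)) ^ ((p - 2)/2) • Q‖ ^ 2
          ≤ C * (max εm (min (max ‖P‖ ‖Q‖) εp)) ^ (p - 2) * ‖P - Q‖ ^ 2 := by
  refine ⟨1/4, 9/4, by norm_num, by norm_num, ?_⟩
  intro d _ εm εp hεm hε P Q
  rcases le_total ‖Q‖ ‖P‖ with h | h
  · exact stmt1_aux p hp1 hp2 εm εp hεm hε P Q h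
  · have H := stmt1_aux p hp1 hp2 εm εp hεm hε Q P h
    rw [max_comm ‖Q‖ ‖P‖, norm_sub_rev Q P,
      norm_sub_rev ((max εm (min ‖Q‖ εp)) ^ ((p - 2)/2) • Q)] at H
    exact H
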